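/- Let m > 0, a > 0, b > 0, p > 0, N₀ > 0 and γ > 0. Let L ≥ 1 and let m₁,…,m_L be pairwise distinct positive reals with weights w_j = ∏_{i≠j} m_j/(m_j − m_i). Let X and Z be independent real random variables on a probability space, where X is exponentially distributed with mean m, and Z has the hypoexponential density f_Z(z) = Σ_{j=1}^{L} w_j·(1/m_j)·exp(−z/m_j) on [0,∞). Set u = γ·p/(a·m) and v = (γ·N₀ + b)/(a·m). Then Pr[ (aX − b)⁺ < γ·(p·Z + N₀) ] = 1 − exp(−v) · Σ_{j=1}^{L} w_j / (1 + u·m_j). (This is the outage probability in the case of an equal number of transmit and receive antennas, M = N, i.e. shape k = 1.) -/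

import Mathlib

open MeasureTheory ProbabilityTheory Finset
open scoped ProbabilityTheory ENNReal

lemma OutAux.integral_exp_rate {c : ℝ} (hc : 0 < c) :
    ∫ x in Set.Ioi (0:ℝ), Real.exp (-(c*x)) = c⁻¹ := by
  have h := MeasureTheory.integral_comp_mul_left_Ioi (fun x => Real.exp (-x)) 0 hc
  simp only [mul_zero, smul_eq_mul, integral_exp_neg_Ioi, neg_zero, Real.exp_zero, mul_one] at h
  exact h

lemma OutAux.indicator_eq (g : ℝ → ℝ) :
    (fun z : ℝ => if 0 ≤ z then g z else 0) = Set.indicator (Set.Ici 0) g := by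
  ext z; simp [Set.indicator_apply]

lemma OutAux.integrableOn_exp {rr : ℝ} (hr : 0 < rr) :
    IntegrableOn (fun z : ℝ => Real.exp (-(rr * z))) (Set.Ici 0) := by
  have := exp_neg_integrableOn_Ioi 0 hr
  simp only [neg_mul] at this
  exact (integrableOn_Ici_iff_integrableOn_Ioi).mpr this

lemma OutAux.integrable_ite_sum_exp {L : ℕ} (c r : Fin L → ℝ) (hr : ∀ j, 0 < r j) :
    Integrable (fun z : ℝ => if 0 ≤ z then ∑ j, c j * Real.exp (-(r j * z)) else 0) := by
  rw [OutAux.indicator_eq]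
  refine MeasureTheory.IntegrableOn.integrable_indicator ?_ measurableSet_Ici
  apply MeasureTheory.integrable_finset_sum
  intro j _
  exact (OutAux.integrableOn_exp (hr j)).const_mul _

lemma OutAux.integral_ite_sum_exp {L : ℕ} (c r : Fin L → ℝ) (hr : ∀ j, 0 < r j) :
    (∫ z : ℝ, if 0 ≤ z then ∑ j, c j * Real.exp (-(r j * z)) else 0) = ∑ j, c j / r j := by
  rw [OutAux.indicator_eq, integral_indicator measurableSet_Ici,
    integral_Ici_eq_integral_Ioi,
    integral_finset_sum _ (fun j _ =>
      ((OutAux.integrableOn_exp (hr j)).mono_set Set.Ioi_subset_Ici_self).const_mul (c j))]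
  refine Finset.sum_congr rfl fun j _ => ?_
  rw [integral_const_mul, OutAux.integral_exp_rate (hr j), div_eq_mul_inv]

lemma OutAux.sum_w_eq_one {L : ℕ} (hL : 1 ≤ L) (mz : Fin L → ℝ) (hmz : ∀ j, 0 < mz j)
    (hdist : Function.Injective mz) :
    ∑ j, ∏ i ∈ univ.erase j, mz j / (mz j - mz i) = 1 := by
  classical
  have : Nonempty (Fin L) := ⟨⟨0, hL⟩⟩
  set v : Fin L → ℝ := fun j => (mz j)⁻¹ with hv
  have hvinj : Function.Injective v := fun i j h => by
    apply hdist
    have := congrArg Inv.inv h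
    simpa [hv, inv_inv] using this
  have hsum := Lagrange.sum_basis (v := v) (s := univ) hvinj.injOn univ_nonempty
  have hev := congrArg (Polynomial.eval (0:ℝ)) hsum
  rw [Polynomial.eval_finset_sum] at hev
  simp only [Polynomial.eval_one] at hev
  rw [← hev]
  refine Finset.sum_congr rfl fun j _ => ?_
  rw [Lagrange.basis, Polynomial.eval_prod]
  refine Finset.prod_congr rfl fun i hi => ?_
  have hij : mz j ≠ mz i := fun h => (Finset.mem_erase.mp hi).1 (hdist h.symm)
  have hj0 := (hmz j).ne'
  have hi0 := (hmz i).ne'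
  have hsub : mz j - mz i ≠ 0 := sub_ne_zero.mpr hij
  rw [Lagrange.basisDivisor]
  simp only [Polynomial.eval_mul, Polynomial.eval_C, Polynomial.eval_sub, Polynomial.eval_X, hv]
  rw [zero_sub]
  have hvv : (mz j)⁻¹ - (mz i)⁻¹ = (mz i - mz j) / (mz j * mz i) := by
    field_simp
  rw [hvv, inv_div]
  have h2 : mz i - mz j ≠ 0 := sub_ne_zero.mpr hij.symm
  field_simp
  ring

lemma OutAux.ofReal_max (x : ℝ) : ENNReal.ofReal (max x 0) = ENNReal.ofReal x := by
  rcases le_total 0 x with h | h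
  · rw [max_eq_left h]
  · rw [max_eq_right h, ENNReal.ofReal_zero, ENNReal.ofReal_of_nonpos h]

/-- Outage probability with an equal number of transmit and receive antennas
(`M = N`, i.e. shape `k = 1`): `X` is exponential with mean `m`, `Z` is
hypoexponential with pairwise distinct positive parameters `mz j` and weights
`w j = Π_{i ≠ j} mz j / (mz j − mz i)`, `X` and `Z` are independent,
`u = γp/(am)` and `v = (γN₀ + b)/(am)`; then
`Pr[(aX − b)⁺ < γ(pZ + N₀)] = 1 − e^{−v} Σ_j w j / (1 + u·mz j)`. -/
theorem outage_probability_exponential_hypoexponential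
    {Ω : Type*} [MeasureSpace Ω] [IsProbabilityMeasure (ℙ : Measure Ω)]
    {m a b p N₀ γ : ℝ}
    (hm : 0 < m) (ha : 0 < a) (hb : 0 < b) (hp : 0 < p) (hN₀ : 0 < N₀) (hγ : 0 < γ)
    {L : ℕ} (hL : 1 ≤ L) (mz : Fin L → ℝ) (hmz : ∀ j, 0 < mz j)
    (hdist : Function.Injective mz)
    (w : Fin L → ℝ) (hw : ∀ j, w j = ∏ i ∈ univ.erase j, mz j / (mz j - mz i))
    (X Z : Ω → ℝ) (hX : Measurable X) (hZ : Measurable Z)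
    (hXlaw : Measure.map X ℙ = expMeasure m⁻¹)
    (hZlaw : Measure.map Z ℙ = volume.withDensity (fun z => ENNReal.ofReal
        (if 0 ≤ z then ∑ j, w j * (1 / mz j) * Real.exp (-z / mz j) else 0)))
    (hindep : IndepFun X Z ℙ)
    (u v : ℝ) (hu : u = γ * p / (a * m)) (hv : v = (γ * N₀ + b) / (a * m)) :
    (ℙ {ω | max (a * X ω - b) 0 < γ * (p * Z ω + N₀)}).toReal
      = 1 - Real.exp (-v) * ∑ j, w j / (1 + u * mz j) := by
  classical
  have hr : (0:ℝ) < m⁻¹ := inv_pos.mpr hm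
  have hu0 : 0 < u := by rw [hu]; positivity
  have hv0 : 0 < v := by rw [hv]; positivity
  set f : ℝ → ℝ := fun z => if 0 ≤ z then ∑ j, w j * (1 / mz j) * Real.exp (-z / mz j) else 0
    with hfdef
  have hZlaw' : Measure.map Z ℙ = volume.withDensity (fun z => ENNReal.ofReal (f z)) := hZlaw
  set G : ℝ → ℝ := fun z => 1 - Real.exp (-(u * z + v)) with hGdef
  set F₂ : ℝ → ℝ := fun z => if 0 ≤ z then
      ∑ j, (w j * (1 / mz j) * Real.exp (-v)) * Real.exp (-((u + (mz j)⁻¹) * z)) else 0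
    with hF₂def
  have hrr : ∀ j : Fin L, (0:ℝ) < (mz j)⁻¹ := fun j => inv_pos.mpr (hmz j)
  have hrr2 : ∀ j : Fin L, (0:ℝ) < u + (mz j)⁻¹ := fun j => add_pos hu0 (hrr j)
  -- rewrite f in standard form
  have hf_eq : (fun z : ℝ => if 0 ≤ z then
      ∑ j, (w j * (1 / mz j)) * Real.exp (-((mz j)⁻¹ * z)) else 0) = f := by
    funext z
    by_cases hz : 0 ≤ z <;> simp only [hfdef, if_pos, if_neg, hz, if_true, if_false]
    refine Finset.sum_congr rfl fun j _ => ?_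
    have harg : -z / mz j = -((mz j)⁻¹ * z) := by rw [neg_div, div_eq_inv_mul]
    rw [harg]
  have hIntf : Integrable f := hf_eq ▸ OutAux.integrable_ite_sum_exp _ _ hrr
  have hsumw : ∑ j, w j = 1 := by
    rw [Finset.sum_congr rfl fun j _ => hw j]
    exact OutAux.sum_w_eq_one hL mz hmz hdist
  have hIntegral_f : ∫ z, f z = 1 := by
    rw [← hf_eq, OutAux.integral_ite_sum_exp _ _ hrr]
    have hterm : ∀ j : Fin L, (w j * (1 / mz j)) / (mz j)⁻¹ = w j := by
      intro j
      field_simp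
      rw [mul_div_assoc, div_self (hmz j).ne', mul_one]
    rw [Finset.sum_congr rfl fun j _ => hterm j]
    exact hsumw
  -- f is a.e. nonnegative
  haveI hprobZ : IsProbabilityMeasure (Measure.map Z ℙ) := Measure.isProbabilityMeasure_map hZ.aemeasurable
  have h1 : ∫⁻ z, ENNReal.ofReal (f z) = 1 := by
    have hμ : (Measure.map Z ℙ) Set.univ = 1 := measure_univ
    rwa [hZlaw', withDensity_apply _ MeasurableSet.univ, Measure.restrict_univ] at hμ
  have hposint : ∫ z, max (f z) 0 = 1 := by
    have h2 : ENNReal.ofReal (∫ z, max (f z) 0) = ∫⁻ z, ENNReal.ofReal (max (f z) 0) :=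
      ofReal_integral_eq_lintegral_ofReal hIntf.pos_part (ae_of_all _ fun z => le_max_right _ _)
    rw [lintegral_congr fun z => OutAux.ofReal_max (f z), h1] at h2
    have h3 : (0:ℝ) ≤ ∫ z, max (f z) 0 :=
      integral_nonneg fun z => le_max_right _ _
    rw [← ENNReal.ofReal_one] at h2
    exact (ENNReal.ofReal_eq_ofReal_iff h3 one_pos.le).mp h2
  have hfnn : ∀ᵐ z, 0 ≤ f z := by
    have h3 : ∫ z, (max (f z) 0 - f z) = 0 := by
      rw [integral_sub hIntf.pos_part hIntf, hposint, hIntegral_f, sub_self]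
    have h4 := (integral_eq_zero_iff_of_nonneg_ae
      (ae_of_all _ fun z => sub_nonneg.mpr (le_max_left (f z) 0))
      (hIntf.pos_part.sub hIntf)).mp h3
    filter_upwards [h4] with z hz
    have hz' : max (f z) 0 - f z = 0 := hz
    have := le_max_right (f z) 0
    linarith
  -- measurability
  have hfm : Measurable f := by
    apply Measurable.ite (measurableSet_le measurable_const measurable_id)
    · exact Finset.measurable_sum _ fun j _ => by fun_prop
    · exact measurable_const
  have hGm : Measurable fun z => ENNReal.ofReal (G z) := by
    apply ENNReal.measurable_ofReal.comp
    fun_prop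
  -- main identity for the probability
  set S : Set (ℝ × ℝ) := {q | max (a * q.1 - b) 0 < γ * (p * q.2 + N₀)} with hSdef
  have hS : MeasurableSet S := by
    apply measurableSet_lt
    · exact ((measurable_fst.const_mul a).sub measurable_const).max measurable_const
    · exact ((measurable_snd.const_mul p).add measurable_const).const_mul γ
  have hmap := (indepFun_iff_map_prod_eq_prod_map_map hX.aemeasurable hZ.aemeasurable).mp hindep
  haveI : IsProbabilityMeasure (expMeasure m⁻¹) := isProbabilityMeasure_expMeasure hr
  have hPP : ℙ {ω | max (a * X ω - b) 0 < γ * (p * Z ω + N₀)}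
      = ∫⁻ z, (Measure.map X ℙ) ((fun x => (x, z)) ⁻¹' S) ∂(Measure.map Z ℙ) := by
    have e1 : ℙ {ω | max (a * X ω - b) 0 < γ * (p * Z ω + N₀)}
        = Measure.map (fun ω => (X ω, Z ω)) ℙ S := by
      rw [Measure.map_apply (hX.prodMk hZ) hS]
      rfl
    rw [e1, hmap, hXlaw]
    rw [Measure.prod_apply_symm hS, ← hXlaw]
  have hZnn : ∀ᵐ z ∂(Measure.map Z ℙ), 0 ≤ z := by
    rw [ae_iff]
    have hset : {z : ℝ | ¬ 0 ≤ z} = Set.Iio 0 := Set.ext fun z => by simp [not_le]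
    rw [hset, hZlaw', withDensity_apply _ measurableSet_Iio]
    rw [setLIntegral_congr_fun (g := fun _ => (0:ℝ≥0∞)) measurableSet_Iio
      (fun z (hz : z < 0) => by
        simp only [hfdef, if_neg (not_le.mpr hz), ENNReal.ofReal_zero]),
      lintegral_zero]
  have hinner : ∀ᵐ z ∂(Measure.map Z ℙ),
      (Measure.map X ℙ) ((fun x => (x, z)) ⁻¹' S) = ENNReal.ofReal (G z) := by
    filter_upwards [hZnn] with z hz
    have hpz : 0 ≤ p * z := mul_nonneg hp.le hz
    have hc : 0 < γ * (p * z + N₀) := by nlinarith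
    have hset : ((fun x : ℝ => (x, z)) ⁻¹' S) = Set.Iio ((b + γ * (p * z + N₀)) / a) := by
      ext x
      simp only [hSdef, Set.mem_preimage, Set.mem_setOf_eq, Set.mem_Iio, max_lt_iff]
      have hcomm : a * x = x * a := mul_comm a x
      constructor
      · rintro ⟨h1, _⟩
        rw [lt_div_iff₀ ha]
        linarith
      · intro h1
        rw [lt_div_iff₀ ha] at h1
        exact ⟨by linarith, hc⟩
    have ht : 0 < (b + γ * (p * z + N₀)) / a := by positivity
    rw [hset, hXlaw]
    have e2 : expMeasure m⁻¹ (Set.Iio ((b + γ * (p * z + N₀)) / a))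
        = ∫⁻ y in Set.Iic ((b + γ * (p * z + N₀)) / a), exponentialPDF m⁻¹ y := by
      rw [show expMeasure m⁻¹ = volume.withDensity (exponentialPDF m⁻¹) from rfl,
        withDensity_apply _ measurableSet_Iio]
      exact setLIntegral_congr Iio_ae_eq_Iic
    rw [e2, lintegral_exponentialPDF_eq_antiDeriv hr, if_pos ht.le]
    have harg : m⁻¹ * ((b + γ * (p * z + N₀)) / a) = u * z + v := by
      rw [hu, hv]
      field_simp
      ring
    rw [harg]
  -- pointwise product form
  have hfG : (fun z => f z * G z) = fun z => f z - F₂ z := by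
    funext z
    by_cases hz : 0 ≤ z
    · simp only [hfdef, hGdef, hF₂def, if_pos hz]
      rw [mul_sub, mul_one, Finset.sum_mul]
      congr 1
      refine Finset.sum_congr rfl fun j _ => ?_
      rw [mul_assoc (w j * (1 / mz j))]
      have hexp : Real.exp (-z / mz j) * Real.exp (-(u * z + v))
          = Real.exp (-v) * Real.exp (-((u + (mz j)⁻¹) * z)) := by
        rw [← Real.exp_add, ← Real.exp_add]
        congr 1
        have := (hmz j).ne'
        field_simp
        ring
      rw [hexp]
      ring
    · simp only [hfdef, hF₂def, if_neg hz, zero_mul, sub_zero]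
  have hIntF₂ : Integrable F₂ := by
    have := OutAux.integrable_ite_sum_exp
      (fun j => w j * (1 / mz j) * Real.exp (-v)) (fun j => u + (mz j)⁻¹) hrr2
    exact this
  have hIntfG : Integrable (fun z => f z * G z) := by
    rw [hfG]; exact hIntf.sub hIntF₂
  have hfGnn : 0 ≤ᵐ[volume] fun z => f z * G z := by
    filter_upwards [hfnn] with z hz
    by_cases hz0 : 0 ≤ z
    · apply mul_nonneg hz
      simp only [hGdef, sub_nonneg]
      rw [Real.exp_le_one_iff]
      nlinarith
    · show (0:ℝ) ≤ f z * G z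
      simp only [hfdef, if_neg hz0, zero_mul, le_refl]
  have hF₂val : ∫ z, F₂ z = Real.exp (-v) * ∑ j, w j / (1 + u * mz j) := by
    rw [show (∫ z, F₂ z) = ∑ j, (w j * (1 / mz j) * Real.exp (-v)) / (u + (mz j)⁻¹) from
      OutAux.integral_ite_sum_exp _ _ hrr2]
    rw [Finset.mul_sum]
    refine Finset.sum_congr rfl fun j _ => ?_
    have h0 := (hmz j).ne'
    have h1 : u + (mz j)⁻¹ ≠ 0 := (hrr2 j).ne'
    have h2 : (0:ℝ) < 1 + u * mz j :=
      add_pos_of_pos_of_nonneg one_pos (mul_pos hu0 (hmz j)).le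
    have hkey : u + (mz j)⁻¹ = (1 + u * mz j) / mz j := by
      field_simp
      ring
    rw [hkey, div_div_eq_mul_div]
    conv_rhs => rw [← mul_div_assoc]
    rw [div_eq_div_iff h2.ne' h2.ne']
    field_simp
  have hval : ∫ z, f z * G z = 1 - Real.exp (-v) * ∑ j, w j / (1 + u * mz j) := by
    rw [show (fun z => f z * G z) = fun z => f z - F₂ z from hfG]
    rw [integral_sub hIntf hIntF₂, hIntegral_f, hF₂val]
  have hmain : ℙ {ω | max (a * X ω - b) 0 < γ * (p * Z ω + N₀)}
      = ENNReal.ofReal (∫ z, f z * G z) := by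
    have hfm' : Measurable (fun z : ℝ => ENNReal.ofReal (f z)) :=
      ENNReal.measurable_ofReal.comp hfm
    rw [hPP, lintegral_congr_ae hinner, hZlaw',
      lintegral_withDensity_eq_lintegral_mul _ hfm' hGm]
    rw [ofReal_integral_eq_lintegral_ofReal hIntfG hfGnn]
    apply lintegral_congr_ae
    filter_upwards [hfnn] with z hz
    simp only [Pi.mul_apply]
    exact (ENNReal.ofReal_mul hz).symm
  rw [hmain, ENNReal.toReal_ofReal (integral_nonneg_of_ae hfGnn), hval]
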